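/- arXiv:1009.1865 — 6 statements merged into one kernel-verified Lean document; each statement's English description precedes it below -/
import Mathlib

section
/- Let h ≥ 1 be an integer, a a real number, and N a natural number. Then Σ_{0 ≤ k ≤ ⌊N/2⌋} binom(N,2k) a^{2k} (-1)^k (h)_k / (N+1)^{h+k} = (1/(h-1)!) ∫₀^∞ t^{h-1} e^{-t} · (1/2)[((1 + i a √t) e^{-t})^N + ((1 − i a √t) e^{-t})^N] dt, where (h)_k = h(h+1)···(h+k-1) is the rising factorial. -/
open Finset MeasureTheory Complex

/-- Rising factorial `h (h+1) ⋯ (h+k-1)`. -/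
def rising (h k : ℕ) : ℕ := ∏ i ∈ Finset.range k, (h + i)

lemma aux_sum_even (n : ℕ) (g : ℕ → ℂ) (hg : ∀ j, Odd j → g j = 0) :
    ∑ j ∈ Finset.range (n + 1), g j = ∑ k ∈ Finset.range (n / 2 + 1), g (2 * k) := by
  classical
  rw [← Finset.sum_filter_of_ne (p := fun j => Even j)
    (fun x _ hx => (Nat.even_or_odd x).resolve_right fun ho => hx (hg x ho))]
  refine Finset.sum_bij' (fun j _ => j / 2) (fun k _ => 2 * k) ?_ ?_ ?_ ?_ ?_
  · intro a ha
    simp only [Finset.mem_filter, Finset.mem_range] at ha ⊢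
    omega
  · intro a ha
    simp only [Finset.mem_filter, Finset.mem_range] at ha ⊢
    exact ⟨by omega, ⟨a, by omega⟩⟩
  · intro a ha
    simp only [Finset.mem_filter, Finset.mem_range] at ha
    obtain ⟨c, hc⟩ := ha.2
    omega
  · intro a _
    omega
  · intro a ha
    simp only [Finset.mem_filter, Finset.mem_range] at ha
    obtain ⟨c, hc⟩ := ha.2
    congr 1; omega

lemma aux_binom (z : ℂ) (N : ℕ) :
    (1 + z) ^ N + (1 - z) ^ N =
      ∑ k ∈ Finset.range (N / 2 + 1), 2 * (N.choose (2 * k) : ℂ) * z ^ (2 * k) := by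
  have h1 : (1 + z) ^ N = ∑ j ∈ Finset.range (N + 1), z ^ j * (N.choose j : ℂ) := by
    rw [add_comm, add_pow]; simp
  have h2 : (1 - z) ^ N = ∑ j ∈ Finset.range (N + 1), (-z) ^ j * (N.choose j : ℂ) := by
    rw [sub_eq_add_neg, add_comm, add_pow]; simp
  rw [h1, h2, ← Finset.sum_add_distrib]
  rw [aux_sum_even N (fun j => z ^ j * (N.choose j : ℂ) + (-z) ^ j * (N.choose j : ℂ))
    (fun j hj => by rw [Odd.neg_pow hj]; ring)]
  refine Finset.sum_congr rfl fun k _ => ?_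
  rw [Even.neg_pow ⟨k, by ring⟩]
  ring

lemma aux_rising (h k : ℕ) (hh : 1 ≤ h) :
    Nat.factorial (h - 1) * rising h k = Nat.factorial (h - 1 + k) := by
  induction k with
  | zero => simp [rising]
  | succ k ih =>
    rw [rising, Finset.prod_range_succ, ← rising, ← mul_assoc, ih]
    have h1 : h - 1 + (k + 1) = (h - 1 + k) + 1 := by omega
    rw [h1, Nat.factorial_succ]
    have h2 : h + k = h - 1 + k + 1 := by omega
    rw [h2]; ring

lemma aux_integrable (m : ℕ) {r : ℝ} (hr : 0 < r) :
    IntegrableOn (fun t : ℝ => (t : ℂ) ^ m * Complex.exp ((-(r * t) : ℝ) : ℂ)) (Set.Ioi 0) := by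
  have hre : IntegrableOn (fun t : ℝ => t ^ m * Real.exp (-(r * t))) (Set.Ioi 0) := by
    have := integrableOn_rpow_mul_exp_neg_mul_rpow (p := 1) (s := (m : ℝ)) (b := r)
      (lt_of_lt_of_le (by norm_num) (Nat.cast_nonneg m)) one_pos hr
    refine this.congr_fun (fun x hx => ?_) measurableSet_Ioi
    dsimp only
    rw [Real.rpow_one, Real.rpow_natCast, neg_mul]
  refine ⟨?_, ?_⟩
  · refine (Continuous.aestronglyMeasurable ?_).restrict
    continuity
  · refine HasFiniteIntegral.mono' hre.2 ?_
    filter_upwards [ae_restrict_mem measurableSet_Ioi] with x hx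
    rw [norm_mul, norm_pow]
    simp [Complex.norm_exp, abs_of_pos (Set.mem_Ioi.mp hx)]

lemma aux_integral (m : ℕ) {r : ℝ} (hr : 0 < r) :
    ∫ t : ℝ in Set.Ioi 0, (t : ℂ) ^ m * Complex.exp ((-(r * t) : ℝ) : ℂ) =
      (Nat.factorial m : ℂ) / (r : ℂ) ^ (m + 1) := by
  have hre : (0 : ℝ) < ((m : ℂ) + 1).re := by simp; positivity
  have hint := integral_cpow_mul_exp_neg_mul_Ioi (a := (m : ℂ) + 1) hre hr
  have heq : Set.EqOn (fun t : ℝ => (t : ℂ) ^ ((m : ℂ) + 1 - 1) * Complex.exp (-((r : ℂ) * t)))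
      (fun t : ℝ => (t : ℂ) ^ m * Complex.exp ((-(r * t) : ℝ) : ℂ)) (Set.Ioi 0) := by
    intro t ht
    simp only
    rw [add_sub_cancel_right, Complex.cpow_natCast]
    push_cast
    ring_nf
  rw [setIntegral_congr_fun measurableSet_Ioi heq] at hint
  rw [hint, Complex.Gamma_nat_eq_factorial]
  have : ((m : ℂ) + 1) = ((m + 1 : ℕ) : ℂ) := by push_cast; ring
  rw [this, Complex.cpow_natCast]
  rw [div_pow, one_pow]
  have hrne : (r : ℂ) ^ (m + 1) ≠ 0 := pow_ne_zero _ (by exact_mod_cast hr.ne')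
  field_simp

theorem stmt_4 (h : ℕ) (hh : 1 ≤ h) (a : ℝ) (N : ℕ) :
    ∑ k ∈ Finset.range (N / 2 + 1),
        (N.choose (2 * k) : ℂ) * (a : ℂ) ^ (2 * k) * (-1) ^ k * (rising h k : ℂ) /
          ((N : ℂ) + 1) ^ (h + k) =
      (1 / (Nat.factorial (h - 1) : ℂ)) *
        ∫ t : ℝ in Set.Ioi 0, (t : ℂ) ^ (h - 1) * Complex.exp (-(t : ℂ)) *
          ((1 / 2 : ℂ) *
            (((1 + Complex.I * (a : ℂ) * (Real.sqrt t : ℂ)) * Complex.exp (-(t : ℂ))) ^ N +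
             ((1 - Complex.I * (a : ℂ) * (Real.sqrt t : ℂ)) * Complex.exp (-(t : ℂ))) ^ N)) := by
  set r : ℝ := (N : ℝ) + 1 with hr_def
  have hr : 0 < r := by positivity
  have key : Set.EqOn
      (fun t : ℝ => (t : ℂ) ^ (h - 1) * Complex.exp (-(t : ℂ)) *
          ((1 / 2 : ℂ) *
            (((1 + Complex.I * (a : ℂ) * (Real.sqrt t : ℂ)) * Complex.exp (-(t : ℂ))) ^ N +
             ((1 - Complex.I * (a : ℂ) * (Real.sqrt t : ℂ)) * Complex.exp (-(t : ℂ))) ^ N)))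
      (fun t : ℝ => ∑ k ∈ Finset.range (N / 2 + 1),
          (N.choose (2 * k) : ℂ) * (a : ℂ) ^ (2 * k) * (-1) ^ k *
            ((t : ℂ) ^ (h - 1 + k) * Complex.exp ((-(r * t) : ℝ) : ℂ)))
      (Set.Ioi 0) := by
    intro t ht
    have ht0 : (0 : ℝ) ≤ t := le_of_lt ht
    simp only
    set z : ℂ := Complex.I * (a : ℂ) * (Real.sqrt t : ℂ) with hz_def
    have hst : ((Real.sqrt t : ℝ) : ℂ) ^ 2 = (t : ℂ) := by
      rw [← Complex.ofReal_pow, Real.sq_sqrt ht0]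
    have hz : z ^ 2 = -((a : ℂ) ^ 2 * t) := by
      rw [hz_def, mul_pow, mul_pow, Complex.I_sq, hst]; ring
    have hfac : ((1 + z) * Complex.exp (-(t : ℂ))) ^ N
        + ((1 - z) * Complex.exp (-(t : ℂ))) ^ N
        = ((1 + z) ^ N + (1 - z) ^ N) * Complex.exp (-(t : ℂ)) ^ N := by
      rw [mul_pow, mul_pow]; ring
    rw [hfac, aux_binom, Finset.sum_mul, Finset.mul_sum, Finset.mul_sum]
    refine Finset.sum_congr rfl fun k _ => ?_
    have hE : Complex.exp (-(t : ℂ)) * Complex.exp (-(t : ℂ)) ^ N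
        = Complex.exp ((-(r * t) : ℝ) : ℂ) := by
      rw [← Complex.exp_nat_mul, ← Complex.exp_add]
      congr 1
      rw [hr_def]
      push_cast
      ring
    have hzk : z ^ (2 * k) = (-1) ^ k * (a : ℂ) ^ (2 * k) * (t : ℂ) ^ k := by
      rw [pow_mul, hz, neg_pow, mul_pow, ← pow_mul]; ring
    rw [hzk, pow_add, ← hE]
    ring
  rw [setIntegral_congr_fun measurableSet_Ioi key,
    integral_finset_sum _ (fun k _ => ((aux_integrable (h - 1 + k) hr).const_mul _)),
    Finset.mul_sum]
  refine Finset.sum_congr rfl fun k _ => ?_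
  rw [MeasureTheory.integral_const_mul, aux_integral (h - 1 + k) hr]
  have h1 : h - 1 + k + 1 = h + k := by omega
  have h2 : ((Nat.factorial (h - 1 + k)) : ℂ)
      = (Nat.factorial (h - 1) : ℂ) * (rising h k : ℂ) := by
    exact_mod_cast congrArg (Nat.cast (R := ℂ)) (aux_rising h k hh).symm
  have h3 : ((r : ℝ) : ℂ) = (N : ℂ) + 1 := by rw [hr_def]; push_cast; ring
  rw [h1, h2, h3]
  have hfne : (Nat.factorial (h - 1) : ℂ) ≠ 0 := by
    exact_mod_cast (Nat.factorial_pos (h - 1)).ne'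
  have hNne : ((N : ℂ) + 1) ^ (h + k) ≠ 0 := by
    apply pow_ne_zero
    intro hc
    have h4 : ((N : ℝ) + 1 : ℝ) = 0 := by exact_mod_cast congrArg Complex.re hc
    have h5 : (0:ℝ) < (N : ℝ) + 1 := by positivity
    linarith
  field_simp
end

section
/- Let h ≥ 1 be an integer and a a real number with |a| ≤ √2. Then lim_{N→∞} Σ_{0 ≤ k ≤ ⌊N/2⌋} binom(N,2k) a^{2k} (-1)^k (h)_k / (N+1)^{h+k} = 0, where (h)_k is the rising factorial. -/
open Filter MeasureTheory Set

lemma rising_mul_fact (h k : ℕ) (hh : 1 ≤ h) :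
    (rising h k) * Nat.factorial (h - 1) = Nat.factorial (h + k - 1) := by
  induction k with
  | zero => simp [rising]
  | succ k ih =>
      have h1 : h + (k + 1) - 1 = (h + k - 1) + 1 := by omega
      rw [rising, Finset.prod_range_succ, ← rising, h1, Nat.factorial_succ, ← ih]
      have h2 : h + k - 1 + 1 = h + k := by omega
      rw [h2]; ring

lemma integrableOn_pow_exp (n : ℕ) (r : ℝ) (hr : 0 < r) :
    IntegrableOn (fun t : ℝ => t ^ n * Real.exp (-(r * t))) (Ioi 0) := by
  have H := integrableOn_rpow_mul_exp_neg_mul_rpow (s := (n : ℝ)) (p := 1) (b := r)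
    (lt_of_lt_of_le neg_one_lt_zero (Nat.cast_nonneg n)) zero_lt_one hr
  refine H.congr_fun (fun x hx => ?_) measurableSet_Ioi
  beta_reduce
  rw [Real.rpow_natCast, Real.rpow_one, neg_mul]

lemma integral_pow_exp (n : ℕ) (r : ℝ) (hr : 0 < r) :
    ∫ t in Ioi (0:ℝ), t ^ n * Real.exp (-(r * t))
      = (Nat.factorial n : ℝ) / r ^ (n + 1) := by
  have H := Real.integral_rpow_mul_exp_neg_mul_Ioi (a := (n : ℝ) + 1) (by positivity) hr
  rw [Real.Gamma_nat_eq_factorial] at H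
  simp only [add_sub_cancel_right, Real.rpow_natCast] at H
  rw [show ((n : ℝ) + 1) = ((n + 1 : ℕ) : ℝ) by push_cast; ring, Real.rpow_natCast] at H
  rw [H, div_pow, one_pow, div_mul_eq_mul_div, one_mul]

lemma sum_even_re (N : ℕ) (a t : ℝ) (ht : 0 ≤ t) :
    ∑ k ∈ Finset.range (N / 2 + 1),
      (N.choose (2 * k) : ℝ) * a ^ (2 * k) * (-1) ^ k * t ^ k
      = (((1 : ℂ) + Complex.I * ((a * Real.sqrt t : ℝ) : ℂ)) ^ N).re := by
  set c : ℝ := a * Real.sqrt t with hc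
  set z : ℂ := Complex.I * (c : ℂ) with hzdef
  have hz2 : z ^ 2 = (((-(a ^ 2 * t)) : ℝ) : ℂ) := by
    rw [hzdef, mul_pow, Complex.I_sq, hc]
    push_cast
    rw [mul_pow, show ((Real.sqrt t : ℂ)) ^ 2 = (t : ℂ) by
      rw [← Complex.ofReal_pow, Real.sq_sqrt ht]]
    ring
  have expand : ((1 : ℂ) + z) ^ N
      = ∑ j ∈ Finset.range (N + 1), (N.choose j : ℂ) * z ^ j := by
    rw [add_comm, add_pow]
    simp [mul_comm]
  rw [expand, Complex.re_sum]
  rw [← Finset.sum_filter_add_sum_filter_not (Finset.range (N + 1)) (fun j => Even j)]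
  have hodd : ∑ j ∈ (Finset.range (N + 1)).filter (fun j => ¬ Even j),
      ((N.choose j : ℂ) * z ^ j).re = 0 := by
    refine Finset.sum_eq_zero (fun j hj => ?_)
    obtain ⟨k, hk⟩ := Nat.not_even_iff_odd.mp (Finset.mem_filter.mp hj).2
    have : (N.choose j : ℂ) * z ^ j
        = Complex.I * (((N.choose j : ℝ) * (-(a ^ 2 * t)) ^ k * c : ℝ) : ℂ) := by
      rw [hk, pow_add, pow_mul, hz2, pow_one, hzdef]
      push_cast
      ring
    rw [this, Complex.mul_re, Complex.I_re, Complex.I_im, Complex.ofReal_re,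
      Complex.ofReal_im]
    ring
  rw [hodd, add_zero]
  refine Finset.sum_nbij' (fun k => 2 * k) (fun j => j / 2) ?_ ?_ ?_ ?_ ?_
  · intro k hk
    simp only [Finset.mem_filter, Finset.mem_range] at *
    exact ⟨by omega, even_two_mul k⟩
  · intro j hj
    simp only [Finset.mem_filter, Finset.mem_range] at *
    obtain ⟨hj1, hj2⟩ := hj
    rw [Nat.even_iff] at hj2
    omega
  · intro k hk
    show 2 * k / 2 = k
    omega
  · intro j hj
    simp only [Finset.mem_filter, Finset.mem_range] at hj
    obtain ⟨hj1, hj2⟩ := hj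
    rw [Nat.even_iff] at hj2
    show 2 * (j / 2) = j
    omega
  · intro k hk
    show (N.choose (2 * k) : ℝ) * a ^ (2 * k) * (-1) ^ k * t ^ k
        = ((N.choose (2 * k) : ℂ) * z ^ (2 * k)).re
    conv_rhs => rw [pow_mul, hz2]
    rw [show ((N.choose (2 * k) : ℂ)) = (((N.choose (2 * k) : ℝ)) : ℂ) by push_cast; rfl]
    rw [← Complex.ofReal_pow, ← Complex.ofReal_mul, Complex.ofReal_re]
    rw [show (-(a ^ 2 * t)) ^ k = (-1) ^ k * (a ^ 2) ^ k * t ^ k by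
      rw [neg_pow, mul_pow]; ring, ← pow_mul]
    ring

theorem stmt_5 (h : ℕ) (hh : 1 ≤ h) (a : ℝ) (ha : |a| ≤ Real.sqrt 2) :
    Tendsto (fun N : ℕ =>
        ∑ k ∈ Finset.range (N / 2 + 1),
          (N.choose (2 * k) : ℝ) * a ^ (2 * k) * (-1) ^ k * (rising h k : ℝ) /
            ((N : ℝ) + 1) ^ (h + k))
      atTop (nhds 0) := by
  have ha2 : a ^ 2 ≤ 2 := by
    have h1 := sq_abs a
    have h2 : Real.sqrt 2 ^ 2 = 2 := Real.sq_sqrt (by norm_num)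
    nlinarith [Real.sqrt_nonneg 2, abs_nonneg a]
  set F : ℕ → ℝ → ℝ := fun N t =>
    t ^ (h - 1) * Real.exp (-(((N : ℝ) + 1) * t)) *
      (((1 : ℂ) + Complex.I * ((a * Real.sqrt t : ℝ) : ℂ)) ^ N).re with hF
  -- absolute value of the complex base
  have habs : ∀ t : ℝ, 0 ≤ t →
      ‖(1 : ℂ) + Complex.I * ((a * Real.sqrt t : ℝ) : ℂ)‖
        = Real.sqrt (1 + a ^ 2 * t) := by
    intro t ht
    rw [Complex.norm_def, Complex.normSq_apply]
    have hre : (((1 : ℂ) + Complex.I * ((a * Real.sqrt t : ℝ) : ℂ))).re = 1 := by simp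
    have him : (((1 : ℂ) + Complex.I * ((a * Real.sqrt t : ℝ) : ℂ))).im
        = a * Real.sqrt t := by simp
    rw [hre, him]
    congr 1
    linear_combination a ^ 2 * (Real.sq_sqrt ht)
  have habs_le : ∀ t : ℝ, 0 ≤ t →
      ‖(1 : ℂ) + Complex.I * ((a * Real.sqrt t : ℝ) : ℂ)‖ ≤ Real.exp t := by
    intro t ht
    rw [habs t ht]
    have h1 : 1 + a ^ 2 * t ≤ Real.exp t ^ 2 := by
      have h2 := Real.add_one_le_exp (t + t)
      have h3 : Real.exp t ^ 2 = Real.exp (t + t) := by rw [sq, ← Real.exp_add]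
      nlinarith
    calc Real.sqrt (1 + a ^ 2 * t) ≤ Real.sqrt (Real.exp t ^ 2) := Real.sqrt_le_sqrt h1
      _ = Real.exp t := Real.sqrt_sq (Real.exp_nonneg t)
  -- the key integral representation
  have key : ∀ N : ℕ,
      (∑ k ∈ Finset.range (N / 2 + 1),
          (N.choose (2 * k) : ℝ) * a ^ (2 * k) * (-1) ^ k * (rising h k : ℝ) /
            ((N : ℝ) + 1) ^ (h + k))
        = ((Nat.factorial (h - 1) : ℝ))⁻¹ * ∫ t in Ioi (0:ℝ), F N t := by
    intro N
    have hN1 : (0:ℝ) < (N : ℝ) + 1 := by positivity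
    have hint : ∀ k : ℕ, IntegrableOn (fun t : ℝ =>
        (N.choose (2 * k) : ℝ) * a ^ (2 * k) * (-1) ^ k *
          (t ^ (h + k - 1) * Real.exp (-(((N : ℝ) + 1) * t)))) (Ioi 0) :=
      fun k => (integrableOn_pow_exp (h + k - 1) ((N : ℝ) + 1) hN1).const_mul _
    have hFsum : EqOn (F N) (fun t => ∑ k ∈ Finset.range (N / 2 + 1),
        (N.choose (2 * k) : ℝ) * a ^ (2 * k) * (-1) ^ k *
          (t ^ (h + k - 1) * Real.exp (-(((N : ℝ) + 1) * t)))) (Ioi 0) := by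
      intro t ht
      have ht0 : (0:ℝ) ≤ t := (mem_Ioi.mp ht).le
      simp only [hF]
      rw [← sum_even_re N a t ht0, Finset.mul_sum]
      refine Finset.sum_congr rfl fun k _ => ?_
      rw [show h + k - 1 = (h - 1) + k by omega, pow_add]
      ring
    have hI : ∫ t in Ioi (0:ℝ), F N t
        = ∑ k ∈ Finset.range (N / 2 + 1),
          (N.choose (2 * k) : ℝ) * a ^ (2 * k) * (-1) ^ k *
            ((Nat.factorial (h + k - 1) : ℝ) / ((N : ℝ) + 1) ^ (h + k)) := by
      rw [setIntegral_congr_fun measurableSet_Ioi hFsum,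
        integral_finset_sum _ (fun k _ => hint k)]
      refine Finset.sum_congr rfl fun k _ => ?_
      rw [MeasureTheory.integral_const_mul, integral_pow_exp (h + k - 1) ((N : ℝ) + 1) hN1,
        show h + k - 1 + 1 = h + k by omega]
    rw [hI, Finset.mul_sum]
    refine Finset.sum_congr rfl fun k _ => ?_
    have hfact : ((Nat.factorial (h + k - 1)) : ℝ)
        = (rising h k : ℝ) * ((Nat.factorial (h - 1)) : ℝ) := by
      exact_mod_cast (rising_mul_fact h k hh).symm
    have hfpos : ((Nat.factorial (h - 1)) : ℝ) ≠ 0 :=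
      Nat.cast_ne_zero.mpr (Nat.factorial_ne_zero _)
    rw [hfact]
    field_simp
  -- dominated convergence
  have hmeas : ∀ N : ℕ, AEStronglyMeasurable (F N) (volume.restrict (Ioi 0)) := by
    intro N
    have hc : Continuous (F N) := by
      apply Continuous.mul
      · exact (continuous_pow _).mul (Real.continuous_exp.comp (continuous_const.mul continuous_id).neg)
      · exact Complex.continuous_re.comp
          ((continuous_const.add (continuous_const.mul
            (Complex.continuous_ofReal.comp (continuous_const.mul Real.continuous_sqrt)))).pow N)
    exact hc.aestronglyMeasurable
  have hbound_int : IntegrableOn (fun t : ℝ => t ^ (h - 1) * Real.exp (-(1 * t))) (Ioi 0) :=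
    integrableOn_pow_exp (h - 1) 1 one_pos
  have hbd : ∀ N : ℕ, ∀ᵐ t ∂(volume.restrict (Ioi (0:ℝ))),
      ‖F N t‖ ≤ t ^ (h - 1) * Real.exp (-(1 * t)) := by
    intro N
    filter_upwards [ae_restrict_mem measurableSet_Ioi] with t ht
    have ht0 : 0 < t := mem_Ioi.mp ht
    have h1 : |(((1 : ℂ) + Complex.I * ((a * Real.sqrt t : ℝ) : ℂ)) ^ N).re|
        ≤ Real.exp t ^ N := by
      refine (Complex.abs_re_le_norm _).trans ?_
      rw [norm_pow]
      exact pow_le_pow_left₀ (norm_nonneg _) (habs_le t ht0.le) N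
    have heq : ‖F N t‖ = t ^ (h - 1) * Real.exp (-(((N : ℝ) + 1) * t)) *
        |(((1 : ℂ) + Complex.I * ((a * Real.sqrt t : ℝ) : ℂ)) ^ N).re| := by
      simp only [hF]
      rw [Real.norm_eq_abs, abs_mul, abs_mul, abs_of_nonneg (pow_nonneg ht0.le _),
        abs_of_nonneg (Real.exp_pos _).le]
    rw [heq]
    calc t ^ (h - 1) * Real.exp (-(((N : ℝ) + 1) * t)) *
          |(((1 : ℂ) + Complex.I * ((a * Real.sqrt t : ℝ) : ℂ)) ^ N).re|
        ≤ t ^ (h - 1) * Real.exp (-(((N : ℝ) + 1) * t)) * Real.exp t ^ N := by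
          gcongr
      _ = t ^ (h - 1) * Real.exp (-(1 * t)) := by
          rw [← Real.exp_nat_mul, mul_assoc, ← Real.exp_add]
          congr 1
          push_cast
          ring
  have hlim : ∀ᵐ t ∂(volume.restrict (Ioi (0:ℝ))),
      Tendsto (fun N => F N t) atTop (nhds 0) := by
    filter_upwards [ae_restrict_mem measurableSet_Ioi] with t ht
    have ht0 : 0 < t := mem_Ioi.mp ht
    set r : ℝ := Real.sqrt (1 + a ^ 2 * t) * Real.exp (-t) with hr
    have hr0 : 0 ≤ r := mul_nonneg (Real.sqrt_nonneg _) (Real.exp_pos _).le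
    have hrlt : Real.sqrt (1 + a ^ 2 * t) < Real.exp t := by
      have h2 := Real.add_one_lt_exp (show t + t ≠ 0 by positivity)
      have h3 : Real.exp t ^ 2 = Real.exp (t + t) := by rw [sq, ← Real.exp_add]
      have h4 : 1 + a ^ 2 * t < Real.exp t ^ 2 := by nlinarith
      calc Real.sqrt (1 + a ^ 2 * t) < Real.sqrt (Real.exp t ^ 2) :=
            Real.sqrt_lt_sqrt (by positivity) h4
        _ = Real.exp t := Real.sqrt_sq (Real.exp_pos t).le
    have hr1 : r < 1 := by
      have := (div_lt_one (Real.exp_pos t)).mpr hrlt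
      rwa [div_eq_mul_inv, ← Real.exp_neg] at this
    have hFle : ∀ N : ℕ, ‖F N t‖ ≤ (t ^ (h - 1) * Real.exp (-t)) * r ^ N := by
      intro N
      have h1 : |(((1 : ℂ) + Complex.I * ((a * Real.sqrt t : ℝ) : ℂ)) ^ N).re|
          ≤ Real.sqrt (1 + a ^ 2 * t) ^ N := by
        refine (Complex.abs_re_le_norm _).trans ?_
        rw [norm_pow, habs t ht0.le]
      have heq : ‖F N t‖ = t ^ (h - 1) * Real.exp (-(((N : ℝ) + 1) * t)) *
          |(((1 : ℂ) + Complex.I * ((a * Real.sqrt t : ℝ) : ℂ)) ^ N).re| := by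
        simp only [hF]
        rw [Real.norm_eq_abs, abs_mul, abs_mul, abs_of_nonneg (pow_nonneg ht0.le _),
          abs_of_nonneg (Real.exp_pos _).le]
      rw [heq]
      calc t ^ (h - 1) * Real.exp (-(((N : ℝ) + 1) * t)) *
            |(((1 : ℂ) + Complex.I * ((a * Real.sqrt t : ℝ) : ℂ)) ^ N).re|
          ≤ t ^ (h - 1) * Real.exp (-(((N : ℝ) + 1) * t)) *
              Real.sqrt (1 + a ^ 2 * t) ^ N := by
            gcongr
        _ = (t ^ (h - 1) * Real.exp (-t)) * r ^ N := by
            rw [hr, mul_pow, ← Real.exp_nat_mul]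
            rw [show Real.exp (-(((N : ℝ) + 1) * t))
                = Real.exp (-t) * Real.exp ((N : ℝ) * -t) by
              rw [← Real.exp_add]; congr 1; ring]
            ring
    refine squeeze_zero_norm hFle ?_
    have := (tendsto_pow_atTop_nhds_zero_of_lt_one hr0 hr1).const_mul
      (t ^ (h - 1) * Real.exp (-t))
    simpa using this
  have h0 : Tendsto (fun N : ℕ => ∫ t in Ioi (0:ℝ), F N t) atTop (nhds 0) := by
    have := MeasureTheory.tendsto_integral_of_dominated_convergence
      (μ := volume.restrict (Ioi (0:ℝ)))
      (f := fun _ => (0:ℝ)) (fun t => t ^ (h - 1) * Real.exp (-(1 * t)))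
      hmeas hbound_int hbd hlim
    simpa using this
  refine Tendsto.congr (fun N => (key N).symm) ?_
  have := h0.const_mul ((Nat.factorial (h - 1) : ℝ))⁻¹
  simpa using this
end

section
/- Let h ≥ 1 be an integer and a a real number with 0 < |a| ≤ √2. Then lim_{N→∞} Σ_{0 ≤ k ≤ ⌊(N-1)/2⌋} binom(N,2k+1) a^{2k} (-1)^k (h)_k / (N+1)^{h+k} = 0, where (h)_k is the rising factorial. -/
open Filter MeasureTheory Set

section aux

lemma sum_even_odd {M : Type*} [AddCommMonoid M] (f : ℕ → M) (n : ℕ) :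
    ∑ j ∈ Finset.range (2*n), f j
      = (∑ k ∈ Finset.range n, f (2*k)) + ∑ k ∈ Finset.range n, f (2*k+1) := by
  induction n with
  | zero => simp
  | succ n ih =>
    rw [show 2*(n+1) = (2*n+1)+1 by ring, Finset.sum_range_succ, Finset.sum_range_succ, ih,
      Finset.sum_range_succ, Finset.sum_range_succ]
    abel

lemma odd_binom' (N : ℕ) (x : ℂ) :
    2 * ∑ k ∈ Finset.range ((N-1)/2+1), (N.choose (2*k+1) : ℂ) * x^(2*k+1)
      = (1+x)^N - (1-x)^N := by
  have h1 : (1+x)^N = ∑ j ∈ Finset.range (N+1), (N.choose j : ℂ) * x^j := by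
    rw [add_comm, add_pow]
    exact Finset.sum_congr rfl fun j _ => by ring
  have h2 : (1-x)^N = ∑ j ∈ Finset.range (N+1), (N.choose j : ℂ) * (-x)^j := by
    rw [sub_eq_add_neg, add_comm, add_pow]
    exact Finset.sum_congr rfl fun j _ => by ring
  set F : ℕ → ℂ := fun j => (N.choose j : ℂ) * x^j - (N.choose j : ℂ) * (-x)^j with hF
  have key : (1+x)^N - (1-x)^N = ∑ j ∈ Finset.range (N+1), F j := by
    rw [h1, h2, ← Finset.sum_sub_distrib]
  have hext : ∑ j ∈ Finset.range (N+1), F j = ∑ j ∈ Finset.range (2*(N+1)), F j := by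
    refine Finset.sum_subset (Finset.range_subset_range.2 (by omega)) ?_
    intro j _ hj
    have hj' : N < j := by simpa using hj
    simp [hF, Nat.choose_eq_zero_of_lt hj']
  have heven : ∀ k, F (2*k) = 0 := fun k => by
    simp [hF, Even.neg_pow (even_two_mul k)]
  have hodd : ∀ k, F (2*k+1) = 2 * ((N.choose (2*k+1):ℂ) * x^(2*k+1)) := fun k => by
    have hx : (-x)^(2*k+1) = -x^(2*k+1) := Odd.neg_pow ⟨k, by ring⟩ x
    rw [hF]; simp only [hx]; ring
  rw [key, hext, sum_even_odd]
  simp only [heven, hodd, Finset.sum_const_zero, zero_add, ← Finset.mul_sum]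
  congr 1
  refine Finset.sum_subset (Finset.range_subset_range.2 (by omega)) ?_
  intro k _ hk
  have hk' : (N-1)/2 + 1 ≤ k := by simpa using hk
  have hN : N < 2*k+1 := by omega
  simp [Nat.choose_eq_zero_of_lt hN]

lemma factorial_rising' (h k : ℕ) (hh : 1 ≤ h) :
    (h-1+k).factorial = (h-1).factorial * ∏ i ∈ Finset.range k, (h + i) := by
  induction k with
  | zero => simp
  | succ k ih =>
    rw [Finset.prod_range_succ, show h-1+(k+1) = (h-1+k)+1 by omega,
      Nat.factorial_succ, ih, show h-1+k+1 = h+k by omega]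
    ring

lemma integrable_monomial' (m : ℕ) (c : ℝ) (hc : 0 < c) :
    IntegrableOn (fun t => t ^ m * Real.exp (-(c*t))) (Ioi (0:ℝ)) := by
  have h := integrableOn_rpow_mul_exp_neg_mul_rpow (s := (m:ℝ)) (p := 1) (b := c)
    ((by norm_num : (-1:ℝ) < 0).trans_le (Nat.cast_nonneg m)) one_pos hc
  refine h.congr_fun (fun t ht => ?_) measurableSet_Ioi
  dsimp only
  rw [Real.rpow_one, Real.rpow_natCast, neg_mul]

lemma integral_monomial' (m : ℕ) (c : ℝ) (hc : 0 < c) :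
    ∫ t in Ioi (0:ℝ), t ^ m * Real.exp (-(c*t)) = m.factorial / c^(m+1) := by
  have h := Real.integral_rpow_mul_exp_neg_mul_Ioi (a := (m:ℝ)+1) (by positivity) hc
  have h1 : ∀ t ∈ Ioi (0:ℝ), t ^ ((m:ℝ)+1-1) * Real.exp (-(c*t))
      = t^m * Real.exp (-(c*t)) := by
    intro t ht
    rw [show (m:ℝ)+1-1 = (m:ℝ) by ring, Real.rpow_natCast]
  rw [setIntegral_congr_fun measurableSet_Ioi h1] at h
  rw [h, Real.Gamma_nat_eq_factorial,
    show (m:ℝ)+1 = ((m+1:ℕ):ℝ) by push_cast; ring, Real.rpow_natCast, one_div, inv_pow]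
  ring

lemma P_bound' (N : ℕ) (a t : ℝ) (ha : 0 < |a|) (ht : 0 < t) :
    |∑ k ∈ Finset.range ((N-1)/2+1), (N.choose (2*k+1) : ℝ) * (-(a^2*t))^k|
      ≤ Real.sqrt (1+a^2*t) ^ N / (|a| * Real.sqrt t) := by
  set P : ℝ := ∑ k ∈ Finset.range ((N-1)/2+1), (N.choose (2*k+1) : ℝ) * (-(a^2*t))^k with hPdef
  set x : ℂ := ((a * Real.sqrt t : ℝ) : ℂ) * Complex.I with hx
  have hst : Real.sqrt t ^ 2 = t := Real.sq_sqrt ht.le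
  have hstC : ((Real.sqrt t : ℝ) : ℂ)^2 = (t : ℂ) := by
    rw [← Complex.ofReal_pow, hst]
  have hx2 : x^2 = ((-(a^2*t) : ℝ) : ℂ) := by
    rw [hx, mul_pow, Complex.I_sq]
    push_cast
    rw [← hstC]
    ring
  have habs : ‖x‖ = |a| * Real.sqrt t := by
    rw [hx, norm_mul, Complex.norm_I, mul_one, Complex.norm_real, Real.norm_eq_abs, abs_mul,
      abs_of_nonneg (Real.sqrt_nonneg t)]
  have h1x : ‖1+x‖ = Real.sqrt (1+a^2*t) := by
    rw [Complex.norm_def, Complex.normSq_apply]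
    simp only [hx, Complex.add_re, Complex.one_re, Complex.mul_re, Complex.ofReal_re,
      Complex.I_re, Complex.ofReal_im, Complex.I_im, Complex.add_im, Complex.one_im,
      Complex.mul_im]
    congr 1
    linear_combination a^2 * hst
  have h1x' : ‖1-x‖ = Real.sqrt (1+a^2*t) := by
    rw [Complex.norm_def, Complex.normSq_apply]
    simp only [hx, Complex.sub_re, Complex.one_re, Complex.mul_re, Complex.ofReal_re,
      Complex.I_re, Complex.ofReal_im, Complex.I_im, Complex.sub_im, Complex.one_im,
      Complex.mul_im]
    congr 1
    linear_combination a^2 * hst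
  have hsum : ∑ k ∈ Finset.range ((N-1)/2+1), (N.choose (2*k+1):ℂ) * x^(2*k+1)
      = x * (P : ℂ) := by
    rw [hPdef]
    push_cast
    rw [Finset.mul_sum]
    refine Finset.sum_congr rfl fun k _ => ?_
    rw [pow_succ, pow_mul, hx2]
    push_cast
    ring
  have key := odd_binom' N x
  rw [hsum] at key
  have hk2 : ‖2 * (x * (P:ℂ))‖ ≤ 2 * Real.sqrt (1+a^2*t) ^ N := by
    rw [key]
    calc ‖(1+x)^N - (1-x)^N‖
        ≤ ‖(1+x)^N‖ + ‖(1-x)^N‖ := by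
          exact norm_sub_le _ _
      _ = 2 * Real.sqrt (1+a^2*t) ^ N := by
          rw [norm_pow, norm_pow, h1x, h1x']; ring
  rw [norm_mul, norm_mul, habs, Complex.norm_real, Real.norm_eq_abs, Complex.norm_two] at hk2
  have hpos : 0 < |a| * Real.sqrt t := by positivity
  rw [le_div_iff₀ hpos]
  nlinarith [hk2]

end aux

theorem stmt_6 (h : ℕ) (hh : 1 ≤ h) (a : ℝ) (ha : 0 < |a|) (ha2 : |a| ≤ Real.sqrt 2) :
    Tendsto (fun N : ℕ =>
        ∑ k ∈ Finset.range ((N - 1) / 2 + 1),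
          (N.choose (2 * k + 1) : ℝ) * a ^ (2 * k) * (-1) ^ k * (rising h k : ℝ) /
            ((N : ℝ) + 1) ^ (h + k))
      atTop (nhds 0) := by
  have ha2' : a^2 ≤ 2 := by
    have h2 : Real.sqrt 2 ^ 2 = 2 := Real.sq_sqrt (by norm_num)
    nlinarith [sq_abs a, abs_nonneg a, Real.sqrt_nonneg 2]
  set c0 : ℝ := (1:ℝ) / (h-1).factorial with hc0
  have hc0pos : 0 < c0 := by positivity
  set P : ℕ → ℝ → ℝ := fun N t =>
    ∑ k ∈ Finset.range ((N-1)/2+1), (N.choose (2*k+1) : ℝ) * (-(a^2*t))^k with hP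
  set B : ℝ → ℝ := fun t => t^(h-1) * Real.exp (-t) / (|a| * Real.sqrt t) with hB
  set q : ℝ → ℝ := fun t => Real.sqrt (1+a^2*t) * Real.exp (-t) with hq
  -- Step 1: integral representation
  have SN_eq : ∀ N : ℕ,
      (∑ k ∈ Finset.range ((N - 1) / 2 + 1),
          (N.choose (2 * k + 1) : ℝ) * a ^ (2 * k) * (-1) ^ k * (rising h k : ℝ) /
            ((N : ℝ) + 1) ^ (h + k))
      = c0 * ∫ t in Ioi (0:ℝ), t^(h-1) * Real.exp (-(((N:ℝ)+1)*t)) * P N t := by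
    intro N
    have hc : (0:ℝ) < (N:ℝ)+1 := by positivity
    have hint : ∀ k ∈ Finset.range ((N-1)/2+1), IntegrableOn
        (fun t : ℝ => t^(h-1) * Real.exp (-(((N:ℝ)+1)*t)) *
          ((N.choose (2*k+1) : ℝ) * (-(a^2*t))^k)) (Ioi 0) := by
      intro k _
      have hI := (integrable_monomial' (h-1+k) ((N:ℝ)+1) hc).const_mul
        ((N.choose (2*k+1) : ℝ) * (-a^2)^k)
      refine hI.congr (Filter.EventuallyEq.of_eq (funext fun t => ?_))
      rw [pow_add, show -(a^2*t) = (-a^2)*t by ring, mul_pow]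
      ring
    have hfun : (fun t : ℝ => t^(h-1) * Real.exp (-(((N:ℝ)+1)*t)) * P N t)
        = fun t => ∑ k ∈ Finset.range ((N-1)/2+1),
            t^(h-1) * Real.exp (-(((N:ℝ)+1)*t)) * ((N.choose (2*k+1) : ℝ) * (-(a^2*t))^k) := by
      funext t
      rw [hP, Finset.mul_sum]
    rw [hfun, integral_finset_sum _ hint, Finset.mul_sum]
    refine Finset.sum_congr rfl fun k _ => ?_
    have hfun2 : (fun t : ℝ => t^(h-1) * Real.exp (-(((N:ℝ)+1)*t)) *
          ((N.choose (2*k+1) : ℝ) * (-(a^2*t))^k))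
        = fun t => ((N.choose (2*k+1) : ℝ) * (-a^2)^k) *
            (t^(h-1+k) * Real.exp (-(((N:ℝ)+1)*t))) := by
      funext t
      rw [pow_add, show -(a^2*t) = (-a^2)*t by ring, mul_pow]
      ring
    rw [hfun2, integral_const_mul, integral_monomial' (h-1+k) _ hc]
    have hfact : ((h-1+k).factorial : ℝ) = ((h-1).factorial : ℝ) * (rising h k : ℝ) := by
      rw [rising]
      exact_mod_cast congrArg Nat.cast (factorial_rising' h k hh)
    have hneg : (-a^2 : ℝ)^k = (-1)^k * a^(2*k) := by
      rw [neg_pow, pow_mul]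
    have hidx : h-1+k+1 = h+k := by omega
    rw [hidx, hfact, hneg, hc0]
    have hfne : ((h-1).factorial : ℝ) ≠ 0 := by positivity
    have hpne : ((N:ℝ)+1)^(h+k) ≠ 0 := by positivity
    field_simp
  -- Step 2: q bounds
  have hq0 : ∀ t : ℝ, 0 < t → 0 ≤ q t ∧ q t < 1 := by
    intro t ht
    constructor
    · positivity
    · rw [hq]
      have h1 : Real.sqrt (1+a^2*t) < Real.exp t := by
        have h2 : 1 + a^2*t < Real.exp t ^ 2 := by
          have := Real.add_one_lt_exp (by positivity : (2*t : ℝ) ≠ 0)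
          have he : Real.exp (2*t) = Real.exp t ^ 2 := by
            rw [two_mul, Real.exp_add, sq]
          nlinarith [ht, ha2']
        calc Real.sqrt (1+a^2*t) < Real.sqrt (Real.exp t ^ 2) :=
              Real.sqrt_lt_sqrt (by positivity) h2
          _ = Real.exp t := Real.sqrt_sq (Real.exp_pos t).le
      calc Real.sqrt (1+a^2*t) * Real.exp (-t) < Real.exp t * Real.exp (-t) := by
            exact mul_lt_mul_of_pos_right h1 (Real.exp_pos _)
        _ = 1 := by rw [← Real.exp_add]; simp
  -- Step 3: B nonneg on Ioi 0, integrable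
  have hBnn : ∀ t : ℝ, 0 < t → 0 ≤ B t := fun t ht => by rw [hB]; positivity
  have hBint : IntegrableOn B (Ioi (0:ℝ)) := by
    have h1 : (-1:ℝ) < (h:ℝ) - 3/2 := by
      have : (1:ℝ) ≤ h := by exact_mod_cast hh
      linarith
    have hI : IntegrableOn (fun x : ℝ => |a|⁻¹ * (x ^ ((h:ℝ)-3/2) * Real.exp (-1 * x ^ (1:ℝ))))
        (Ioi (0:ℝ)) := (integrableOn_rpow_mul_exp_neg_mul_rpow (s := (h:ℝ)-3/2) (p := 1) (b := 1)
      h1 one_pos one_pos).const_mul (|a|⁻¹)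
    refine hI.congr_fun (fun t ht => ?_) measurableSet_Ioi
    have ht' : (0:ℝ) < t := ht
    have hcast : ((h-1 : ℕ):ℝ) = (h:ℝ) - 1 := by
      push_cast [Nat.cast_sub hh]
      ring
    have h2 : t ^ ((h:ℝ)-3/2) = t^(h-1) / Real.sqrt t := by
      rw [Real.sqrt_eq_rpow, ← Real.rpow_natCast t (h-1), ← Real.rpow_sub ht', hcast]
      congr 1
      ring
    dsimp only
    rw [Real.rpow_one, neg_mul, one_mul, h2, hB]
    field_simp
  -- Step 4: pointwise bound
  have hbound : ∀ N : ℕ, ∀ t : ℝ, 0 < t →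
      |t^(h-1) * Real.exp (-(((N:ℝ)+1)*t)) * P N t| ≤ B t * q t ^ N := by
    intro N t ht
    have hPb := P_bound' N a t ha ht
    have hexp : Real.exp (-(((N:ℝ)+1)*t)) = Real.exp (-t) * Real.exp (-t) ^ N := by
      rw [← Real.exp_nat_mul, ← Real.exp_add]
      congr 1
      ring
    rw [abs_mul, abs_mul, abs_of_nonneg (pow_nonneg ht.le _),
      abs_of_nonneg (Real.exp_pos _).le]
    simp only [hB, hq]
    rw [hexp, div_eq_mul_inv, mul_pow]
    calc t^(h-1) * (Real.exp (-t) * Real.exp (-t)^N) * |P N t|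
        ≤ t^(h-1) * (Real.exp (-t) * Real.exp (-t)^N) *
            (Real.sqrt (1+a^2*t) ^ N / (|a| * Real.sqrt t)) := by
          refine mul_le_mul_of_nonneg_left hPb (by positivity)
      _ = t^(h-1) * Real.exp (-t) * (|a| * Real.sqrt t)⁻¹ *
            (Real.sqrt (1+a^2*t)^N * Real.exp (-t)^N) := by
          rw [div_eq_mul_inv]
          ring
  -- Step 5: measurability of the dominated family
  have hmeas : ∀ N : ℕ, AEStronglyMeasurable (fun t => B t * q t ^ N)
      (volume.restrict (Ioi (0:ℝ))) := by
    intro N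
    refine Measurable.aestronglyMeasurable ?_
    rw [hB, hq]
    fun_prop
  -- Step 6: dominated convergence
  have hG0 : Tendsto (fun N : ℕ => ∫ t in Ioi (0:ℝ), B t * q t ^ N) atTop (nhds 0) := by
    have hDC := MeasureTheory.tendsto_integral_filter_of_dominated_convergence
      (μ := volume.restrict (Ioi (0:ℝ))) (F := fun (N:ℕ) t => B t * q t ^ N)
      (f := fun _ => (0:ℝ)) (bound := B) (l := atTop)
      (Filter.Eventually.of_forall hmeas)
      (Filter.Eventually.of_forall fun N => ?_) hBint ?_
    · simpa using hDC
    · rw [ae_restrict_iff' measurableSet_Ioi]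
      refine Filter.Eventually.of_forall fun t ht => ?_
      have hqt := hq0 t ht
      have : |B t * q t ^ N| = B t * q t ^ N := abs_of_nonneg
        (mul_nonneg (hBnn t ht) (pow_nonneg hqt.1 N))
      rw [Real.norm_eq_abs, this]
      calc B t * q t ^ N ≤ B t * 1 := by
            refine mul_le_mul_of_nonneg_left (pow_le_one₀ hqt.1 hqt.2.le) (hBnn t ht)
        _ = B t := mul_one _
    · rw [ae_restrict_iff' measurableSet_Ioi]
      refine Filter.Eventually.of_forall fun t ht => ?_
      have hqt := hq0 t ht
      have := (tendsto_pow_atTop_nhds_zero_of_lt_one hqt.1 hqt.2).const_mul (B t)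
      simpa using this
  -- Step 7: squeeze
  refine squeeze_zero_norm (fun N => ?_) (by simpa using hG0.const_mul c0)
  rw [SN_eq N, Real.norm_eq_abs, abs_mul, abs_of_nonneg hc0pos.le]
  refine mul_le_mul_of_nonneg_left ?_ hc0pos.le
  rw [← Real.norm_eq_abs]
  refine norm_integral_le_of_norm_le ?_ ?_
  · refine Integrable.mono' hBint (hmeas N) ?_
    rw [ae_restrict_iff' measurableSet_Ioi]
    refine Filter.Eventually.of_forall fun t ht => ?_
    have hqt := hq0 t ht
    rw [Real.norm_eq_abs, abs_of_nonneg (mul_nonneg (hBnn t ht) (pow_nonneg hqt.1 N))]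
    calc B t * q t ^ N ≤ B t * 1 :=
          mul_le_mul_of_nonneg_left (pow_le_one₀ hqt.1 hqt.2.le) (hBnn t ht)
      _ = B t := mul_one _
  · rw [ae_restrict_iff' measurableSet_Ioi]
    exact Filter.Eventually.of_forall fun t ht => hbound N t ht
end

section
/- Let f₊, f₋ : [0,∞) → ℝ be continuous with f₊(0) = 1 and f₋(0) ≠ 0, assume f₊ is differentiable at 0 (with finite derivative), and assume f₊(K) → 0 and √K · f₋(K) → 0 as K → ∞. Define D(K) = (1 - f₊(K))² − K f₋(K)². Then there exists K₀ > 0 with D(K₀) = 0. -/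
open Filter

theorem stmt_7 (fp fm : ℝ → ℝ)
    (hfp : ContinuousOn fp (Set.Ici 0)) (hfm : ContinuousOn fm (Set.Ici 0))
    (hfp0 : fp 0 = 1) (hfm0 : fm 0 ≠ 0)
    (hderiv : ∃ d : ℝ, HasDerivWithinAt fp d (Set.Ici 0) 0)
    (hfptop : Tendsto fp atTop (nhds 0))
    (hfmtop : Tendsto (fun K => Real.sqrt K * fm K) atTop (nhds 0)) :
    ∃ K₀ : ℝ, 0 < K₀ ∧ (1 - fp K₀) ^ 2 - K₀ * (fm K₀) ^ 2 = 0 := by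
  obtain ⟨d, hd⟩ := hderiv
  set D : ℝ → ℝ := fun K => (1 - fp K) ^ 2 - K * fm K ^ 2 with hDdef
  -- slope tends to d within Ioi 0
  have hslope : Tendsto (slope fp 0) (nhdsWithin 0 (Set.Ici 0 \ {0})) (nhds d) :=
    hasDerivWithinAt_iff_tendsto_slope.mp hd
  have hsub : (nhdsWithin (0:ℝ) (Set.Ioi 0)) ≤ nhdsWithin 0 (Set.Ici 0 \ {0}) :=
    nhdsWithin_mono _ (fun x hx => ⟨Set.mem_Ici.mpr (le_of_lt hx), ne_of_gt hx⟩)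
  have hslope' : Tendsto (fun K => (fp K - 1) / K) (nhdsWithin 0 (Set.Ioi 0)) (nhds d) := by
    refine (hslope.mono_left hsub).congr' ?_
    filter_upwards [self_mem_nhdsWithin] with K hK
    simp [slope, hfp0, div_eq_inv_mul]
  have hid : Tendsto (fun K : ℝ => K) (nhdsWithin 0 (Set.Ioi 0)) (nhds 0) :=
    tendsto_id.mono_left nhdsWithin_le_nhds
  have hfmc : Tendsto fm (nhdsWithin 0 (Set.Ioi 0)) (nhds (fm 0)) :=
    ((hfm 0 Set.self_mem_Ici).tendsto).mono_left (nhdsWithin_mono _ Set.Ioi_subset_Ici_self)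
  have hg : Tendsto (fun K => K * ((fp K - 1) / K) ^ 2 - fm K ^ 2)
      (nhdsWithin 0 (Set.Ioi 0)) (nhds (0 * d ^ 2 - fm 0 ^ 2)) :=
    (hid.mul (hslope'.pow 2)).sub (hfmc.pow 2)
  have hlimneg : 0 * d ^ 2 - fm 0 ^ 2 < 0 := by
    have := pow_pos (abs_pos.mpr hfm0) 2
    rw [← sq_abs (fm 0)]; nlinarith
  have hneg : ∀ᶠ K in nhdsWithin 0 (Set.Ioi 0),
      K * ((fp K - 1) / K) ^ 2 - fm K ^ 2 < 0 :=
    hg.eventually (eventually_lt_nhds hlimneg)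
  obtain ⟨a, hga, ha⟩ := (hneg.and self_mem_nhdsWithin).exists
  have ha0 : (0:ℝ) < a := ha
  have hDa : D a < 0 := by
    have hrw : D a = a * (a * ((fp a - 1) / a) ^ 2 - fm a ^ 2) := by
      simp only [hDdef]
      field_simp
      ring
    rw [hrw]
    exact mul_neg_of_pos_of_neg ha0 hga
  -- behavior at infinity
  have hDtop : Tendsto D atTop (nhds 1) := by
    have h1 : Tendsto (fun K => (1 - fp K) ^ 2 - (Real.sqrt K * fm K) ^ 2) atTop
        (nhds ((1 - 0) ^ 2 - 0 ^ 2)) :=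
      ((tendsto_const_nhds.sub hfptop).pow 2).sub (hfmtop.pow 2)
    have h2 : (1 - (0:ℝ)) ^ 2 - 0 ^ 2 = 1 := by norm_num
    rw [h2] at h1
    refine h1.congr' ?_
    filter_upwards [eventually_ge_atTop (0:ℝ)] with K hK
    simp only [hDdef, mul_pow, Real.sq_sqrt hK]
  have hbpos : ∀ᶠ K in atTop, (0:ℝ) < D K :=
    hDtop.eventually (eventually_gt_nhds one_pos)
  obtain ⟨b, hDb, hab⟩ := (hbpos.and (eventually_ge_atTop a)).exists
  -- IVT
  have hDcont : ContinuousOn D (Set.Ici 0) :=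
    ((continuousOn_const.sub hfp).pow 2).sub (continuousOn_id.mul (hfm.pow 2))
  have hsubIcc : Set.Icc a b ⊆ Set.Ici (0:ℝ) := fun x hx => le_trans (le_of_lt ha0) hx.1
  have hivt := intermediate_value_Icc hab (hDcont.mono hsubIcc)
  have h0mem : (0:ℝ) ∈ Set.Icc (D a) (D b) := ⟨le_of_lt hDa, le_of_lt hDb⟩
  obtain ⟨K₀, hK₀mem, hK₀eq⟩ := hivt h0mem
  exact ⟨K₀, lt_of_lt_of_le ha0 hK₀mem.1, hK₀eq⟩
end

section
/- Let a be a real number with a ≠ 0, and for N ≥ 1 set K_N = π²/(a² N²) and X_N(K) = Re[((1 + i a √K) e^{−K})^N]. Then lim_{N→∞} X_N(K_N) = −1. Consequently, for every sequence σ_N ≥ 0 of nonnegative reals, limsup_{N→∞} sup_{K ≥ 0} |X_N(K) − e^{−σ_N K}| ≥ 1. -/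
open Filter

lemma my_cexp_lim (z : ℂ) :
    Tendsto (fun n : ℕ => (1 + z / n) ^ n) atTop (nhds (Complex.exp z)) := by
  rcases eq_or_ne z 0 with rfl | hz
  · simpa using (tendsto_const_nhds : Tendsto (fun _ : ℕ => (1:ℂ)) atTop _)
  · have hinv : Tendsto (fun n : ℕ => ((n : ℝ)⁻¹ : ℝ)) atTop (nhds 0) :=
      tendsto_inv_atTop_nhds_zero_nat
    have hzn : Tendsto (fun n : ℕ => z / n) atTop (nhds 0) := by
      have h := ((Complex.continuous_ofReal.tendsto 0).comp hinv).const_mul z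
      simpa [div_eq_mul_inv, Function.comp] using h
    have hlog : HasDerivAt Complex.log 1 1 := by
      simpa using Complex.hasDerivAt_log
        (by simp [Complex.mem_slitPlane_iff] : (1:ℂ) ∈ Complex.slitPlane)
    have hslope := hasDerivAt_iff_tendsto_slope.mp hlog
    have hmap : Tendsto (fun n : ℕ => 1 + z / n) atTop (nhdsWithin 1 {(1:ℂ)}ᶜ) := by
      apply tendsto_nhdsWithin_of_tendsto_nhds_of_eventually_within
      · simpa using hzn.const_add 1
      · filter_upwards [eventually_ge_atTop 1] with n hn
        have hn0 : (n : ℂ) ≠ 0 := Nat.cast_ne_zero.mpr (by omega)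
        simp [div_eq_zero_iff, hz, hn0]
    have h2 := (hslope.comp hmap).const_mul z
    have h4 : Tendsto (fun n : ℕ => (n : ℂ) * Complex.log (1 + z / n)) atTop (nhds z) := by
      apply Tendsto.congr' _ (by simpa using h2)
      filter_upwards [eventually_ge_atTop 1] with n hn
      have hn0 : (n : ℂ) ≠ 0 := Nat.cast_ne_zero.mpr (by omega)
      have hd : z / n ≠ 0 := div_ne_zero hz hn0
      simp only [Function.comp, slope_def_field, Complex.log_one]
      field_simp
      ring_nf
      field_simp
    have h5 := (Complex.continuous_exp.tendsto z).comp h4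
    apply Tendsto.congr' _ h5
    have hsmall : ∀ᶠ n : ℕ in atTop, ‖z / (n:ℂ)‖ < 1 := by
      have hn : Tendsto (fun n : ℕ => ‖z / (n:ℂ)‖) atTop (nhds 0) := by simpa using hzn.norm
      exact hn.eventually (eventually_lt_nhds one_pos)
    filter_upwards [hsmall] with n hsm
    have hne : (1 : ℂ) + z / n ≠ 0 := by
      intro h
      have : z / (n:ℂ) = -1 := by linear_combination h
      rw [this] at hsm; simp at hsm
    simp only [Function.comp]
    rw [Complex.exp_nat_mul, Complex.exp_log hne]

theorem stmt_13 (a : ℝ) (ha : a ≠ 0)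
    (X : ℕ → ℝ → ℝ)
    (hX : ∀ N K, X N K =
      (((1 + Complex.I * (a : ℂ) * (Real.sqrt K : ℂ)) * Complex.exp (-(K : ℂ))) ^ N).re)
    (Kseq : ℕ → ℝ)
    (hK : ∀ N : ℕ, Kseq N = Real.pi ^ 2 / (a ^ 2 * (N : ℝ) ^ 2)) :
    Tendsto (fun N : ℕ => X N (Kseq N)) atTop (nhds (-1)) ∧
    ∀ σ : ℕ → ℝ, (∀ N, 0 ≤ σ N) → ∀ ε : ℝ, 0 < ε →
      ∃ᶠ N : ℕ in atTop, ∃ K : ℝ, 0 ≤ K ∧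
        1 - ε ≤ |X N K - Real.exp (-(σ N) * K)| := by
  have ha' : (0:ℝ) < |a| := abs_pos.mpr ha
  set s : ℝ := a / |a| with hs
  set c : ℂ := ((Real.pi * s : ℝ) : ℂ) * Complex.I with hc
  -- exp c = -1
  have hexpc : Complex.exp c = -1 := by
    rcases lt_or_gt_of_ne ha with hneg | hpos
    · have hsval : s = -1 := by
        rw [hs, abs_of_neg hneg]; field_simp
      rw [hc, hsval]
      push_cast
      rw [show (Real.pi : ℂ) * (-1) * Complex.I = -((Real.pi : ℂ) * Complex.I) by ring,
        Complex.exp_neg, Complex.exp_pi_mul_I]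
      norm_num
    · have hsval : s = 1 := by
        rw [hs, abs_of_pos hpos]; field_simp
      rw [hc, hsval]
      push_cast
      simpa using Complex.exp_pi_mul_I
  -- eventual identification of X N (Kseq N)
  have hev : ∀ᶠ N : ℕ in atTop,
      X N (Kseq N) = ((1 + c / N) ^ N *
        Complex.exp (-((Real.pi ^ 2 / (a ^ 2 * N) : ℝ) : ℂ))).re := by
    filter_upwards [eventually_ge_atTop 1] with N hN
    have hN0 : (N : ℝ) ≠ 0 := Nat.cast_ne_zero.mpr (by omega)
    have hsq : Real.sqrt (Kseq N) = Real.pi / (|a| * N) := by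
      rw [hK, show Real.pi ^ 2 / (a ^ 2 * (N:ℝ) ^ 2) = (Real.pi / (|a| * N)) ^ 2 by
        rw [div_pow, mul_pow, sq_abs]]
      exact Real.sqrt_sq (by positivity)
    have hcoef : Complex.I * (a : ℂ) * ((Real.sqrt (Kseq N) : ℝ) : ℂ) = c / N := by
      rw [hsq, hc]
      have hr : a * (Real.pi / (|a| * N)) = (Real.pi * s) / N := by
        rw [hs]; field_simp
      calc Complex.I * (a:ℂ) * ((Real.pi / (|a| * N) : ℝ) : ℂ)
          = ((a * (Real.pi / (|a| * N)) : ℝ) : ℂ) * Complex.I := by push_cast; ring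
        _ = (((Real.pi * s) / N : ℝ) : ℂ) * Complex.I := by rw [hr]
        _ = ((Real.pi * s : ℝ) : ℂ) * Complex.I / N := by push_cast; ring
    have hexp : Complex.exp (-((Kseq N : ℝ) : ℂ)) ^ N =
        Complex.exp (-((Real.pi ^ 2 / (a ^ 2 * N) : ℝ) : ℂ)) := by
      rw [← Complex.exp_nat_mul]
      congr 1
      have hr : (N : ℝ) * (-(Kseq N)) = -(Real.pi ^ 2 / (a ^ 2 * N)) := by
        rw [hK]; field_simp
      have := congrArg (fun x : ℝ => (x : ℂ)) hr
      push_cast at this ⊢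
      linear_combination this
    rw [hX, mul_pow, hcoef, hexp]
  -- the complex limit
  have hT1 : Tendsto (fun N : ℕ => (1 + c / N) ^ N) atTop (nhds (-1 : ℂ)) := by
    rw [← hexpc]; exact my_cexp_lim c
  have hT2 : Tendsto (fun N : ℕ =>
      Complex.exp (-((Real.pi ^ 2 / (a ^ 2 * N) : ℝ) : ℂ))) atTop (nhds 1) := by
    have hr : Tendsto (fun N : ℕ => -(Real.pi ^ 2 / (a ^ 2 * (N:ℝ)))) atTop (nhds 0) := by
      have : Tendsto (fun N : ℕ => (Real.pi ^ 2 / a ^ 2) / (N:ℝ)) atTop (nhds 0) :=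
        tendsto_const_div_atTop_nhds_zero_nat _
      have h2 : Tendsto (fun N : ℕ => Real.pi ^ 2 / (a ^ 2 * (N:ℝ))) atTop (nhds 0) := by
        refine this.congr (fun N => ?_)
        rw [div_div]
      simpa using h2.neg
    have hcast := (Complex.continuous_ofReal.tendsto 0).comp hr
    have := (Complex.continuous_exp.tendsto 0).comp hcast
    simp only [Complex.exp_zero] at this
    exact this.congr (fun N => by simp [Function.comp, Complex.ofReal_neg])
  have hTC : Tendsto (fun N : ℕ => ((1 + c / N) ^ N *
      Complex.exp (-((Real.pi ^ 2 / (a ^ 2 * N) : ℝ) : ℂ)))) atTop (nhds (-1 : ℂ)) := by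
    simpa using hT1.mul hT2
  have hTre : Tendsto (fun N : ℕ => X N (Kseq N)) atTop (nhds (-1)) := by
    have := (Complex.continuous_re.tendsto (-1 : ℂ)).comp hTC
    simp only [Complex.neg_re, Complex.one_re] at this
    exact Tendsto.congr' (EventuallyEq.symm hev) (by simpa only [Function.comp_def] using this)
  refine ⟨hTre, ?_⟩
  intro σ hσ ε hε
  apply Eventually.frequently
  have hevX : ∀ᶠ N : ℕ in atTop, X N (Kseq N) ≤ -(1 - ε) := by
    have := hTre.eventually (eventually_lt_nhds (show (-1:ℝ) < -1 + ε by linarith))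
    filter_upwards [this] with N hN
    linarith
  filter_upwards [hevX] with N hN
  refine ⟨Kseq N, by rw [hK]; positivity, ?_⟩
  have hepos : 0 < Real.exp (-(σ N) * Kseq N) := Real.exp_pos _
  have : X N (Kseq N) - Real.exp (-(σ N) * Kseq N) ≤ -(1 - ε) := by linarith
  calc 1 - ε ≤ -(X N (Kseq N) - Real.exp (-(σ N) * Kseq N)) := by linarith
    _ ≤ |X N (Kseq N) - Real.exp (-(σ N) * Kseq N)| := neg_le_abs _
end

section
/- Let A be a ℤ/2-graded associative unital algebra over ℂ with an odd derivation Q satisfying Q² = 0 (i.e. Q(xy) = Q(x)y + (−1)^{|x|} x Q(y) for homogeneous x). Suppose K ∈ A is even, B, c ∈ A are odd, with relations B² = 0, c² = 0, Bc + cB = 1, KB = BK, and Q-action QK = 0, QB = K, Qc = cKc. Let f be an element of the commutative unital subalgebra generated by K such that 1 − f is invertible in that subalgebra. Then Ψ = c · (KB(1−f)^{−1}) · c · f satisfies QΨ + Ψ² = 0. -/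
theorem stmt_15 (A : Type*) [Ring A] [Algebra ℂ A]
    (A₀ A₁ : Submodule ℂ A)
    -- ℤ/2-grading data: decomposition and multiplicative structure
    (hdecomp : A₀ ⊔ A₁ = ⊤)
    (hone : (1 : A) ∈ A₀)
    (h00 : ∀ x ∈ A₀, ∀ y ∈ A₀, x * y ∈ A₀)
    (h01 : ∀ x ∈ A₀, ∀ y ∈ A₁, x * y ∈ A₁)
    (h10 : ∀ x ∈ A₁, ∀ y ∈ A₀, x * y ∈ A₁)
    (h11 : ∀ x ∈ A₁, ∀ y ∈ A₁, x * y ∈ A₀)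
    -- Q is an odd ℂ-linear derivation squaring to zero
    (Q : A →ₗ[ℂ] A)
    (hQ2 : ∀ x, Q (Q x) = 0)
    (hQA₀ : ∀ x ∈ A₀, Q x ∈ A₁) (hQA₁ : ∀ x ∈ A₁, Q x ∈ A₀)
    (hLeibEven : ∀ x ∈ A₀, ∀ y : A, Q (x * y) = Q x * y + x * Q y)
    (hLeibOdd : ∀ x ∈ A₁, ∀ y : A, Q (x * y) = Q x * y - x * Q y)
    -- the elements K, B, c and their relations
    (K B c : A)
    (hK : K ∈ A₀) (hB : B ∈ A₁) (hc : c ∈ A₁)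
    (hB2 : B * B = 0) (hc2 : c * c = 0) (hBc : B * c + c * B = 1)
    (hKB : K * B = B * K)
    (hQK : Q K = 0) (hQB : Q B = K) (hQc : Q c = c * K * c)
    -- f in the subalgebra generated by K, with 1 - f invertible there
    (f g : A) (hf : f ∈ Algebra.adjoin ℂ ({K} : Set A))
    (hg : g ∈ Algebra.adjoin ℂ ({K} : Set A))
    (hginv : (1 - f) * g = 1 ∧ g * (1 - f) = 1) :
    Q (c * (K * B * g) * c * f) + (c * (K * B * g) * c * f) * (c * (K * B * g) * c * f) = 0 := by
  -- Q kills 1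
  have hQ1 : Q (1 : A) = 0 := by
    have h2 := hLeibEven 1 hone 1
    rw [mul_one, one_mul, mul_one] at h2
    exact (left_eq_add.mp h2)
  -- properties of elements of the subalgebra generated by K
  have key : ∀ x ∈ Algebra.adjoin ℂ ({K} : Set A),
      x ∈ A₀ ∧ Q x = 0 ∧ x * K = K * x ∧ x * B = B * x := by
    intro x hx
    induction hx using Algebra.adjoin_induction with
    | mem y hy =>
      rcases hy with rfl
      exact ⟨hK, hQK, rfl, hKB.symm ▸ rfl⟩
    | algebraMap r =>
      have h1 : (algebraMap ℂ A) r = r • (1 : A) := Algebra.algebraMap_eq_smul_one r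
      refine ⟨?_, ?_, ?_, ?_⟩
      · rw [h1]; exact A₀.smul_mem r hone
      · rw [h1, map_smul, hQ1, smul_zero]
      · rw [h1, smul_mul_assoc, one_mul, mul_smul_comm, mul_one]
      · rw [h1, smul_mul_assoc, one_mul, mul_smul_comm, mul_one]
    | add x y hx hy ihx ihy =>
      obtain ⟨h1, h2, h3, h4⟩ := ihx
      obtain ⟨h1', h2', h3', h4'⟩ := ihy
      exact ⟨A₀.add_mem h1 h1', by rw [map_add, h2, h2', add_zero],
        by rw [add_mul, mul_add, h3, h3'], by rw [add_mul, mul_add, h4, h4']⟩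
    | mul x y hx hy ihx ihy =>
      obtain ⟨h1, h2, h3, h4⟩ := ihx
      obtain ⟨h1', h2', h3', h4'⟩ := ihy
      refine ⟨h00 x h1 y h1', ?_, ?_, ?_⟩
      · rw [hLeibEven x h1 y, h2, h2', zero_mul, mul_zero, add_zero]
      · rw [mul_assoc, h3', ← mul_assoc, h3, mul_assoc]
      · rw [mul_assoc, h4', ← mul_assoc, h4, mul_assoc]
  obtain ⟨hfA0, hQf, hfK, hfB⟩ := key f hf
  obtain ⟨hgA0, hQg, hgK, hgB⟩ := key g hg
  -- membership facts
  have hKB1 : K * B ∈ A₁ := h01 K hK B hB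
  have hKBg1 : K * B * g ∈ A₁ := h10 (K * B) hKB1 g hgA0
  -- Q computations
  have hQcf : Q (c * f) = c * K * c * f := by
    rw [hLeibOdd c hc f, hQc, hQf, mul_zero, sub_zero]
  have hQKB : Q (K * B) = K * K := by
    rw [hLeibEven K hK B, hQK, zero_mul, zero_add, hQB]
  have hQKBg : Q (K * B * g) = K * K * g := by
    rw [hLeibOdd (K * B) hKB1 g, hQKB, hQg, mul_zero, sub_zero]
  have hQX : Q ((K * B * g) * (c * f)) = (K * K * g) * (c * f) - (K * B * g) * (c * K * c * f) := by
    rw [hLeibOdd (K * B * g) hKBg1 (c * f), hQKBg, hQcf]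
  have hre : c * (K * B * g) * c * f = c * ((K * B * g) * (c * f)) := by noncomm_ring
  have hQPsi : Q (c * (K * B * g) * c * f) =
      (c * K * c) * ((K * B * g) * (c * f))
      - c * ((K * K * g) * (c * f) - (K * B * g) * (c * K * c * f)) := by
    rw [hre, hLeibOdd c hc ((K * B * g) * (c * f)), hQX, hQc]
  rw [hQPsi, hre]
  -- rewriting system lemmas
  have hBB : ∀ x : A, B * (B * x) = 0 := fun x => by rw [← mul_assoc, hB2, zero_mul]
  have hcc : ∀ x : A, c * (c * x) = 0 := fun x => by rw [← mul_assoc, hc2, zero_mul]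
  have hcB0 : c * B = 1 - B * c := eq_sub_of_add_eq' hBc
  have hcB : ∀ x : A, c * (B * x) = x - B * (c * x) := fun x => by
    rw [← mul_assoc, hcB0, sub_mul, one_mul, mul_assoc]
  have hKB' : ∀ x : A, K * (B * x) = B * (K * x) := fun x => by
    rw [← mul_assoc, hKB, mul_assoc]
  have hKf0 : K * f = f * K := hfK.symm
  have hKf : ∀ x : A, K * (f * x) = f * (K * x) := fun x => by
    rw [← mul_assoc, hKf0, mul_assoc]
  have hKg0 : K * g = g * K := hgK.symm
  have hKg : ∀ x : A, K * (g * x) = g * (K * x) := fun x => by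
    rw [← mul_assoc, hKg0, mul_assoc]
  have hgB' : ∀ x : A, g * (B * x) = B * (g * x) := fun x => by
    rw [← mul_assoc, hgB, mul_assoc]
  have hfB' : ∀ x : A, f * (B * x) = B * (f * x) := fun x => by
    rw [← mul_assoc, hfB, mul_assoc]
  have hgf0 : g * f = g - 1 := by
    have h := hginv.2
    rw [mul_sub, mul_one] at h
    rw [eq_sub_iff_add_eq, add_comm]
    exact (sub_eq_iff_eq_add.mp h).symm
  have hfg0 : f * g = g - 1 := by
    have h := hginv.1
    rw [sub_mul, one_mul] at h
    rw [eq_sub_iff_add_eq, add_comm]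
    exact (sub_eq_iff_eq_add.mp h).symm
  have hgf : ∀ x : A, g * (f * x) = g * x - x := fun x => by
    rw [← mul_assoc, hgf0, sub_mul, one_mul]
  have hfg : ∀ x : A, f * (g * x) = g * x - x := fun x => by
    rw [← mul_assoc, hfg0, sub_mul, one_mul]
  simp only [mul_assoc, mul_sub, sub_mul, mul_one, one_mul, mul_zero, zero_mul,
    hBB, hcc, hcB, hcB0, hKB', hKB, hKf, hKf0, hKg, hKg0, hgB', hgB, hfB', hfB,
    hgf, hgf0, hfg, hfg0]
  noncomm_ring
end
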